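/- Let F₃ = FreeGroup (Fin 3) with free generators a, b, c. For all natural numbers i < j, the intersection of the subgroup generated by {a, bⁱ·c} and the subgroup generated by {a, bʲ·c} is exactly the cyclic subgroup generated by a: Subgroup.closure {a, bⁱ*c} ⊓ Subgroup.closure {a, bʲ*c} = Subgroup.closure {a}. -/

import Mathlib

open FreeGroup

lemma cons_toWord' {α : Type*} [DecidableEq α] (x : α) (s : Bool) (w : FreeGroup α)
    (h : ∀ l, w.toWord ≠ (x, !s) :: l) :
    (FreeGroup.mk [(x, s)] * w).toWord = (x, s) :: w.toWord := by
  conv_lhs => rw [← FreeGroup.mk_toWord (x := w)]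
  rw [FreeGroup.mul_mk, FreeGroup.toWord_mk, List.singleton_append, FreeGroup.reduce.cons,
    FreeGroup.reduce_toWord]
  rcases hw : w.toWord with _ | ⟨⟨y, t⟩, tl⟩
  · rfl
  · simp only []
    rw [if_neg]
    rintro ⟨rfl, rfl⟩
    exact h tl (by rw [hw, Bool.not_not])

lemma pow_mul_toWord' {α : Type*} [DecidableEq α] (x : α) (s : Bool) (m : ℕ) (hm : m ≠ 0)
    (w : FreeGroup α) (h : ∀ l, w.toWord ≠ (x, !s) :: l) :
    ∃ l, ((FreeGroup.mk [(x, s)]) ^ m * w).toWord = (x, s) :: l := by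
  induction m with
  | zero => exact absurd rfl hm
  | succ m ih =>
    rcases Nat.eq_zero_or_pos m with rfl | hm'
    · rw [pow_one]
      exact ⟨w.toWord, cons_toWord' x s w h⟩
    · obtain ⟨l, hl⟩ := ih hm'.ne'
      rw [pow_succ', mul_assoc,
        cons_toWord' x s _ (fun l' hl' => by rw [hl] at hl'; simp at hl')]
      exact ⟨_, rfl⟩

lemma inv_of' {α : Type*} (x : α) : (FreeGroup.of x)⁻¹ = FreeGroup.mk [(x, false)] := by
  have : FreeGroup.of x = FreeGroup.mk [(x, true)] := rfl
  rw [this, FreeGroup.inv_mk, FreeGroup.invRev]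
  rfl

universe u
lemma lift_of_pow_injective {ι α : Type u} [DecidableEq α] [Nontrivial ι]
    (gen : ι → α) (hgen : Function.Injective gen) (e : ι → ℕ) (he : ∀ i, e i ≠ 0) :
    Function.Injective (FreeGroup.lift fun i => (FreeGroup.of (gen i)) ^ (e i)) := by
  refine @FreeGroup.injective_lift_of_ping_pong ι _ (FreeGroup α) _
    (fun i => (FreeGroup.of (gen i)) ^ (e i)) (FreeGroup α) _
    (fun i => {w : FreeGroup α | ∃ l, w.toWord = (gen i, true) :: l})
    (fun i => {w : FreeGroup α | ∃ l, w.toWord = (gen i, false) :: l}) ?_ ?_ ?_ ?_ ?_ ?_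
  · exact fun i => ⟨FreeGroup.of (gen i), ⟨[], FreeGroup.toWord_of _⟩⟩
  · intro i j hij
    simp only [Function.onFun]
    rw [Set.disjoint_left]
    rintro w ⟨l, hl⟩ ⟨l', hl'⟩
    have := hl.symm.trans hl'
    simp only [List.cons.injEq, Prod.mk.injEq] at this
    exact hij (hgen this.1.1)
  · intro i j hij
    simp only [Function.onFun]
    rw [Set.disjoint_left]
    rintro w ⟨l, hl⟩ ⟨l', hl'⟩
    have := hl.symm.trans hl'
    simp only [List.cons.injEq, Prod.mk.injEq] at this
    exact hij (hgen this.1.1)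
  · intro i j
    rw [Set.disjoint_left]
    rintro w ⟨l, hl⟩ ⟨l', hl'⟩
    have := hl.symm.trans hl'
    simp at this
  · intro i z hz
    rw [Set.mem_smul_set] at hz
    obtain ⟨w, hw, rfl⟩ := hz
    rw [smul_eq_mul]
    have hof : FreeGroup.of (gen i) = FreeGroup.mk [(gen i, true)] := rfl
    rw [hof]
    refine pow_mul_toWord' _ true (e i) (he i) w ?_
    intro l hl
    exact hw ⟨l, by simpa using hl⟩
  · intro i z hz
    rw [Set.mem_smul_set] at hz
    obtain ⟨w, hw, rfl⟩ := hz
    rw [smul_eq_mul, Pi.inv_apply, ← inv_pow, inv_of']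
    refine pow_mul_toWord' _ false (e i) (he i) w ?_
    intro l hl
    exact hw ⟨l, by simpa using hl⟩

/-- In the free group `F₃ = ⟨a, b, c⟩`, for naturals `i < j`,
`⟨a, bⁱc⟩ ∩ ⟨a, bʲc⟩ = ⟨a⟩`. -/
theorem closure_inf_eq_closure_singleton {i j : ℕ} (hij : i < j) :
    Subgroup.closure {FreeGroup.of (0 : Fin 3),
        (FreeGroup.of (1 : Fin 3)) ^ i * FreeGroup.of (2 : Fin 3)} ⊓
      Subgroup.closure {FreeGroup.of (0 : Fin 3),
        (FreeGroup.of (1 : Fin 3)) ^ j * FreeGroup.of (2 : Fin 3)} =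
      Subgroup.closure {FreeGroup.of (0 : Fin 3)} := by
  set a : FreeGroup (Fin 3) := FreeGroup.of 0 with ha
  set b : FreeGroup (Fin 3) := FreeGroup.of 1 with hb
  set c : FreeGroup (Fin 3) := FreeGroup.of 2 with hc
  set d : ℕ := j - i with hdd
  have hd0 : d ≠ 0 := Nat.sub_ne_zero_of_lt hij
  -- the comparison homomorphism killing `bⁱc`
  set k : FreeGroup (Fin 3) →* FreeGroup (Fin 3) :=
    FreeGroup.lift ![a, b, (b ^ i)⁻¹] with hk
  have hk0 : k a = a := by simp [hk, ha]
  have hk1 : k b = b := by simp [hk, hb]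
  have hk2 : k c = (b ^ i)⁻¹ := by simp [hk, hc]
  have hki : k (b ^ i * c) = 1 := by
    rw [_root_.map_mul, _root_.map_pow, hk1, hk2, mul_inv_cancel]
  have hkj : k (b ^ j * c) = b ^ d := by
    rw [_root_.map_mul, _root_.map_pow, hk1, hk2]
    conv_lhs => rw [show j = d + i from (Nat.sub_add_cancel hij.le).symm]
    rw [pow_add, mul_assoc, mul_inv_cancel, mul_one]
  -- the auxiliary free basis data
  set gen : Fin 2 → Fin 3 := ![0, 1] with hgen'
  have hgen : Function.Injective gen := by decide
  set e : Fin 2 → ℕ := ![1, d] with he'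
  have he : ∀ t, e t ≠ 0 := by
    intro t
    fin_cases t
    · simp [he']
    · simpa [he'] using hd0
  set f : Fin 2 → FreeGroup (Fin 3) := fun t => (FreeGroup.of (gen t)) ^ (e t) with hf
  have hinj : Function.Injective (FreeGroup.lift f) := lift_of_pow_injective gen hgen e he
  apply le_antisymm
  · rintro x hx
    rw [Subgroup.mem_inf] at hx
    obtain ⟨hxi, hxj⟩ := hx
    -- write x as a word in `a` and `bʲc`
    have hrange : x ∈ (FreeGroup.lift ![a, b ^ j * c]).range := by
      rw [FreeGroup.range_lift_eq_closure]
      have : Set.range ![a, b ^ j * c] = {a, b ^ j * c} := by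
        simp [Matrix.range_cons, Matrix.range_empty, Set.pair_comm]
      rw [this]
      exact hxj
    obtain ⟨u, hu⟩ := hrange
    -- `k x` lies in `⟨a⟩`
    have hmap : k x ∈ Subgroup.closure {a} := by
      have h1 : k x ∈ Subgroup.map k (Subgroup.closure {a, b ^ i * c}) :=
        Subgroup.mem_map.mpr ⟨x, hxi, rfl⟩
      rw [MonoidHom.map_closure] at h1
      refine Subgroup.closure_le _ |>.2 ?_ h1
      rintro y hy
      rcases hy with ⟨z, hz, rfl⟩
      rcases hz with rfl | rfl
      · rw [hk0]; exact Subgroup.subset_closure rfl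
      · rw [hki]; exact Subgroup.one_mem _
    obtain ⟨n, hn⟩ := Subgroup.mem_closure_singleton.mp hmap
    -- `k ∘ lift ![a, bʲc] = lift f`
    have hcomp : k.comp (FreeGroup.lift ![a, b ^ j * c]) = FreeGroup.lift f := by
      apply FreeGroup.ext_hom
      intro t
      fin_cases t
      · simp only [MonoidHom.comp_apply, FreeGroup.lift_apply_of, Matrix.cons_val_zero, hf, hgen', he']
        simp [hk0]
        exact ha
      · simp only [MonoidHom.comp_apply, FreeGroup.lift_apply_of, Matrix.cons_val_one, Matrix.head_cons,
          hf, hgen', he']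
        simp [hkj, hb]
        rw [← _root_.map_pow, ← _root_.map_mul]; exact hkj
    have hkx : FreeGroup.lift f u = a ^ n := by
      have := congrArg (fun φ : FreeGroup (Fin 2) →* FreeGroup (Fin 3) => φ u) hcomp
      simp only [MonoidHom.comp_apply] at this
      rw [← this, hu, hn]
    have hfu : FreeGroup.lift f ((FreeGroup.of (0 : Fin 2)) ^ n) = a ^ n := by
      rw [_root_.map_zpow, FreeGroup.lift_apply_of]
      simp [hf, hgen', he', ha]
    have hueq : u = (FreeGroup.of (0 : Fin 2)) ^ n := hinj (by rw [hkx, hfu])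
    rw [Subgroup.mem_closure_singleton]
    refine ⟨n, ?_⟩
    rw [← hu, hueq, _root_.map_zpow, FreeGroup.lift_apply_of]
    simp
  · exact le_inf
      (Subgroup.closure_mono (Set.singleton_subset_iff.mpr (Set.mem_insert _ _)))
      (Subgroup.closure_mono (Set.singleton_subset_iff.mpr (Set.mem_insert _ _)))
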